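/- Suppose ∘ is a compatible root graded anti-pre-Lie algebraic structure on sl₂(ℂ), so that there exist constants α₁, β₁, γ₁, λ₁ ∈ ℂ with h∘e = α₁e, e∘h = (α₁−2)e, h∘f = β₁f, f∘h = (β₁+2)f, e∘f = γ₁h, f∘e = (γ₁−1)h, h∘h = λ₁h, e∘e = f∘f = 0. Then α₁ ≠ 2 and β₁ ≠ −2. -/

import Mathlib

/-- For a compatible root graded anti-pre-Lie algebraic structure on
`sl₂(ℂ)`, written with constants `α₁, β₁, γ₁, λ₁`, one has `α₁ ≠ 2` and `β₁ ≠ −2`. -/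
theorem stmt3 {A : Type*} [AddCommGroup A] [Module ℂ A]
    (B : Module.Basis (Fin 3) ℂ A) (e f h : A)
    (he : e = B 0) (hf : f = B 1) (hh : h = B 2)
    (c : A →ₗ[ℂ] A →ₗ[ℂ] A)
    (α₁ β₁ γ₁ lam₁ : ℂ)
    (apl : ∀ x y z : A, c x (c y z) - c y (c x z) = c (c y x - c x y) z)
    (jac : ∀ x y z : A,
      (c (c x y - c y x) z - c z (c x y - c y x)) +
      (c (c y z - c z y) x - c x (c y z - c z y)) +
      (c (c z x - c x z) y - c y (c z x - c x z)) = 0)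
    (hhe : c h e = α₁ • e) (heh : c e h = (α₁ - 2) • e)
    (hhf : c h f = β₁ • f) (hfh : c f h = (β₁ + 2) • f)
    (hef : c e f = γ₁ • h) (hfe : c f e = (γ₁ - 1) • h)
    (hhh : c h h = lam₁ • h) (hee : c e e = 0) (hff : c f f = 0) :
    α₁ ≠ 2 ∧ β₁ ≠ -2 := by
  have hene : e ≠ 0 := by rw [he]; exact B.ne_zero 0
  have hfne : f ≠ 0 := by rw [hf]; exact B.ne_zero 1
  have h1 := apl e f e
  have h2 := apl f e f
  simp only [hfe, hee, hef, map_zero, sub_zero, map_smul, map_sub, heh, hhe,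
    LinearMap.sub_apply, LinearMap.smul_apply, smul_smul] at h1
  simp only [hef, hff, hfe, map_zero, sub_zero, map_smul, map_sub, hfh, hhf,
    LinearMap.sub_apply, LinearMap.smul_apply, smul_smul] at h2
  rw [← sub_smul] at h1 h2
  have e1 := smul_left_injective ℂ hene h1
  have e2 := smul_left_injective ℂ hfne h2
  constructor
  · intro ha; rw [ha] at e1; ring_nf at e1; simp at e1
  · intro hb; rw [hb] at e2; ring_nf at e2; simp at e2
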